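/- arXiv:2603.20685 — 5 statements merged into one kernel-verified Lean document; each statement's English description precedes it below -/
import Mathlib

section
/- Let T be a continuous map of a compact metric space X with non-wandering set Ω. For any open neighborhood U of Ω there exists N ∈ ℕ such that every orbit of T spends at most N steps outside of U; that is, for every x ∈ X, the cardinality of {n ∈ ℕ : Tⁿ(x) ∉ U} is at most N. -/
theorem aux_ncard_biUnion_le {X : Type*} (t : Finset X) (f : X → Set ℕ) :
    (⋃ y ∈ t, f y).ncard ≤ ∑ y ∈ t, (f y).ncard := by
  classical
  induction t using Finset.induction with
  | empty => simp
  | @insert _ _ hnotin ih =>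
      rw [Finset.set_biUnion_insert, Finset.sum_insert hnotin]
      exact le_trans (Set.ncard_union_le _ _) (Nat.add_le_add_left ih _)

theorem stmt_1 {X : Type*} [MetricSpace X] [CompactSpace X]
    (T : X → X) (hT : Continuous T)
    (Ω : Set X)
    (hΩ : Ω = {x : X | ∀ V ∈ nhds x, ∃ n ≥ 1, (V ∩ T^[n] '' V).Nonempty})
    (U : Set X) (hU : IsOpen U) (hΩU : Ω ⊆ U) :
    ∃ N : ℕ, ∀ x : X, ({n : ℕ | T^[n] x ∉ U}).Finite ∧
      ({n : ℕ | T^[n] x ∉ U}).ncard ≤ N := by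
  -- every point outside U is wandering
  have hW : ∀ x : X, x ∉ U → ∃ V ∈ nhds x, ∀ n ≥ 1, V ∩ T^[n] '' V = ∅ := by
    intro x hx
    have hxΩ : x ∉ Ω := fun h => hx (hΩU h)
    rw [hΩ] at hxΩ
    simp only [Set.mem_setOf_eq] at hxΩ
    push_neg at hxΩ
    obtain ⟨V, hV, h⟩ := hxΩ
    exact ⟨V, hV, h⟩
  classical
  choose! V hVnhds hVwand using hW
  -- Uᶜ is compact
  have hK : IsCompact Uᶜ := hU.isClosed_compl.isCompact
  obtain ⟨t, htsub, htcover⟩ := hK.elim_nhds_subcover V (fun x hx => hVnhds x hx)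
  refine ⟨t.card, fun x => ?_⟩
  -- each V y contains at most one orbit point
  have hone : ∀ y ∈ t, ({n : ℕ | T^[n] x ∈ V y}).Subsingleton := by
    intro y hy m hm m' hm'
    by_contra hne
    wlog hlt : m < m' generalizing m m'
    · exact this hm' hm (Ne.symm hne) (by omega)
    have : T^[m'] x ∈ V y ∩ T^[m' - m] '' V y := by
      refine ⟨hm', T^[m] x, hm, ?_⟩
      rw [← Function.iterate_add_apply]
      congr 1
      omega
    rw [hVwand y (htsub y hy) (m' - m) (by omega)] at this
    exact this
  have hsub : {n : ℕ | T^[n] x ∉ U} ⊆ ⋃ y ∈ t, {n : ℕ | T^[n] x ∈ V y} := by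
    intro n hn
    have := htcover hn
    simp only [Set.mem_iUnion] at this ⊢
    obtain ⟨y, hy, hmem⟩ := this
    exact ⟨y, hy, hmem⟩
  have hfin : (⋃ y ∈ t, {n : ℕ | T^[n] x ∈ V y}).Finite :=
    Set.Finite.biUnion t.finite_toSet fun y hy => (hone y hy).finite
  refine ⟨hfin.subset hsub, ?_⟩
  have hle1 : ∀ y ∈ t, ({n : ℕ | T^[n] x ∈ V y}).ncard ≤ 1 := by
    intro y hy
    rcases (hone y hy).eq_empty_or_singleton with h | ⟨a, h⟩ <;> simp [h]
  calc ({n : ℕ | T^[n] x ∉ U}).ncard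
      ≤ (⋃ y ∈ t, {n : ℕ | T^[n] x ∈ V y}).ncard := Set.ncard_le_ncard hsub hfin
    _ ≤ ∑ y ∈ t, ({n : ℕ | T^[n] x ∈ V y}).ncard := aux_ncard_biUnion_le t _
    _ ≤ ∑ _y ∈ t, 1 := Finset.sum_le_sum hle1
    _ = t.card := by simp
end

section
/- Let μ be a Borel probability measure on a compact metric space X, T: X → X continuous, and ψ ∈ L²(μ) orthogonal to all functions of the form φ - φ∘T with φ continuous. Then μ({x : ψ(x) > 0} \ T⁻¹{x : ψ(x) > 0}) = 0. -/
open MeasureTheory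

open scoped ENNReal NNReal

theorem stmt_4 {X : Type*} [MetricSpace X] [CompactSpace X]
    [MeasurableSpace X] [BorelSpace X]
    (μ : Measure X) [IsProbabilityMeasure μ]
    (T : X → X) (hT : Continuous T)
    (ψ : X → ℝ) (hψ : MemLp ψ 2 μ)
    (horth : ∀ φ : C(X, ℝ), ∫ x, (φ x - φ (T x)) * ψ x ∂μ = 0) :
    μ ({x | 0 < ψ x} \ T ⁻¹' {x | 0 < ψ x}) = 0 := by
  classical
  have hsm := hψ.aestronglyMeasurable
  set ψ' : X → ℝ := hsm.mk ψ with hψ'def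
  have hm : Measurable ψ' := hsm.stronglyMeasurable_mk.measurable
  have hae : ψ =ᵐ[μ] ψ' := hsm.ae_eq_mk
  have hTm : Measurable T := hT.measurable
  have hint : Integrable ψ' μ := (hψ.integrable one_le_two).congr hae
  -- positive and negative parts
  set p : X → ℝ := fun x => max (ψ' x) 0 with hp
  set q : X → ℝ := fun x => max (-ψ' x) 0 with hq
  have hpq : ∀ x, p x - q x = ψ' x := by
    intro x; rcases le_total (ψ' x) 0 with h | h <;> simp [hp, hq, max_eq_left, max_eq_right, h] <;> linarith
  have hintp : Integrable p μ := hint.pos_part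
  have hintq : Integrable q μ := hint.neg.pos_part
  -- density measures
  set d₁ : X → ℝ≥0∞ := fun x => ENNReal.ofReal (ψ' x) with hd1
  set d₂ : X → ℝ≥0∞ := fun x => ENNReal.ofReal (-ψ' x) with hd2
  have hd₁m : Measurable d₁ := ENNReal.measurable_ofReal.comp hm
  have hd₂m : Measurable d₂ := ENNReal.measurable_ofReal.comp hm.neg
  set ρ₁ : Measure X := μ.withDensity d₁ with hρ₁
  set ρ₂ : Measure X := μ.withDensity d₂ with hρ₂
  have hfin1 : IsFiniteMeasure ρ₁ := isFiniteMeasure_withDensity_ofReal hint.2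
  have hfin2 : IsFiniteMeasure ρ₂ := isFiniteMeasure_withDensity_ofReal hint.neg.2
  -- the key measure identity
  have key : ρ₁ + Measure.map T ρ₂ = ρ₂ + Measure.map T ρ₁ := by
    refine ext_of_forall_lintegral_eq_of_IsFiniteMeasure (fun f => ?_)
    set g : X → ℝ := fun x => (f x : ℝ) with hg
    have hgc : Continuous g := continuous_subtype_val.comp f.continuous
    have hgm : Measurable g := hgc.measurable
    have hgnn : ∀ x, 0 ≤ g x := fun x => (f x).2
    have hgbd : ∃ C, ∀ x, ‖g x‖ ≤ C := by
      obtain ⟨C, hC⟩ := isCompact_univ.exists_bound_of_continuousOn hgc.continuousOn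
      exact ⟨C, fun x => hC x (Set.mem_univ x)⟩
    have hfm : Measurable fun x => (f x : ℝ≥0∞) :=
      measurable_coe_nnreal_ennreal.comp f.continuous.measurable
    have hcoe : ∀ x, (f x : ℝ≥0∞) = ENNReal.ofReal (g x) := by
      intro x; simp [hg]
    -- four integrable products
    have ig1 : Integrable (fun x => g x * p x) μ := hintp.bdd_mul hgm.aestronglyMeasurable (Filter.Eventually.of_forall hgbd.choose_spec)
    have ig2 : Integrable (fun x => g x * q x) μ := hintq.bdd_mul hgm.aestronglyMeasurable (Filter.Eventually.of_forall hgbd.choose_spec)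
    have ig3 : Integrable (fun x => g (T x) * p x) μ :=
      hintp.bdd_mul (hgm.comp hTm).aestronglyMeasurable
        (Filter.Eventually.of_forall fun x => hgbd.choose_spec (T x))
    have ig4 : Integrable (fun x => g (T x) * q x) μ :=
      hintq.bdd_mul (hgm.comp hTm).aestronglyMeasurable
        (Filter.Eventually.of_forall fun x => hgbd.choose_spec (T x))
    -- rewrite the four lintegrals as real integrals
    have e₁ : ∫⁻ x, (f x : ℝ≥0∞) ∂ρ₁ = ENNReal.ofReal (∫ x, g x * p x ∂μ) := by
      rw [hρ₁, lintegral_withDensity_eq_lintegral_mul μ hd₁m hfm]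
      have hcong : ∀ x, (d₁ * fun x => ((f (x) : ℝ≥0∞))) x = ENNReal.ofReal (g x * p x) := by
        intro x
        have hd : d₁ x = ENNReal.ofReal (p x) := by
          rcases le_total (ψ' x) 0 with h | h
          · simp [hd1, hp, max_eq_right h, ENNReal.ofReal_eq_zero.2 h]
          · simp [hd1, hp, max_eq_left h]
        rw [Pi.mul_apply, hcoe x, hd, ← ENNReal.ofReal_mul (le_max_right _ _),
          mul_comm (p x) (g x)]
      rw [lintegral_congr hcong,
        ← ofReal_integral_eq_lintegral_ofReal ig1
          (Filter.Eventually.of_forall fun x => mul_nonneg (hgnn x) (le_max_right _ _))]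
    have e₂ : ∫⁻ x, (f x : ℝ≥0∞) ∂ρ₂ = ENNReal.ofReal (∫ x, g x * q x ∂μ) := by
      rw [hρ₂, lintegral_withDensity_eq_lintegral_mul μ hd₂m hfm]
      have hcong : ∀ x, (d₂ * fun x => ((f (x) : ℝ≥0∞))) x = ENNReal.ofReal (g x * q x) := by
        intro x
        have hd : d₂ x = ENNReal.ofReal (q x) := by
          rcases le_total (-ψ' x) 0 with h | h
          · simp [hd2, hq, max_eq_right h, ENNReal.ofReal_eq_zero.2 h]
          · simp [hd2, hq, max_eq_left h]
        rw [Pi.mul_apply, hcoe x, hd, ← ENNReal.ofReal_mul (le_max_right _ _),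
          mul_comm (q x) (g x)]
      rw [lintegral_congr hcong,
        ← ofReal_integral_eq_lintegral_ofReal ig2
          (Filter.Eventually.of_forall fun x => mul_nonneg (hgnn x) (le_max_right _ _))]
    have e₃ : ∫⁻ x, (f x : ℝ≥0∞) ∂(Measure.map T ρ₁) = ENNReal.ofReal (∫ x, g (T x) * p x ∂μ) := by
      rw [lintegral_map hfm hTm]
      rw [hρ₁, lintegral_withDensity_eq_lintegral_mul μ hd₁m (g := fun x => ((f (T x) : ℝ≥0∞))) (hfm.comp hTm)]
      have hcong : ∀ x, (d₁ * fun x => ((f (T x) : ℝ≥0∞))) x = ENNReal.ofReal (g (T x) * p x) := by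
        intro x
        have hd : d₁ x = ENNReal.ofReal (p x) := by
          rcases le_total (ψ' x) 0 with h | h
          · simp [hd1, hp, max_eq_right h, ENNReal.ofReal_eq_zero.2 h]
          · simp [hd1, hp, max_eq_left h]
        rw [Pi.mul_apply, hcoe (T x), hd, ← ENNReal.ofReal_mul (le_max_right _ _),
          mul_comm (p x) (g (T x))]
      rw [lintegral_congr hcong,
        ← ofReal_integral_eq_lintegral_ofReal ig3
          (Filter.Eventually.of_forall fun x => mul_nonneg (hgnn (T x)) (le_max_right _ _))]
    have e₄ : ∫⁻ x, (f x : ℝ≥0∞) ∂(Measure.map T ρ₂) = ENNReal.ofReal (∫ x, g (T x) * q x ∂μ) := by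
      rw [lintegral_map hfm hTm]
      rw [hρ₂, lintegral_withDensity_eq_lintegral_mul μ hd₂m (g := fun x => ((f (T x) : ℝ≥0∞))) (hfm.comp hTm)]
      have hcong : ∀ x, (d₂ * fun x => ((f (T x) : ℝ≥0∞))) x = ENNReal.ofReal (g (T x) * q x) := by
        intro x
        have hd : d₂ x = ENNReal.ofReal (q x) := by
          rcases le_total (-ψ' x) 0 with h | h
          · simp [hd2, hq, max_eq_right h, ENNReal.ofReal_eq_zero.2 h]
          · simp [hd2, hq, max_eq_left h]
        rw [Pi.mul_apply, hcoe (T x), hd, ← ENNReal.ofReal_mul (le_max_right _ _),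
          mul_comm (q x) (g (T x))]
      rw [lintegral_congr hcong,
        ← ofReal_integral_eq_lintegral_ofReal ig4
          (Filter.Eventually.of_forall fun x => mul_nonneg (hgnn (T x)) (le_max_right _ _))]
    -- the orthogonality identity with the representative ψ'
    have h5 : ∫ x, g x * ψ' x ∂μ = ∫ x, g (T x) * ψ' x ∂μ := by
      have h0 := horth ⟨g, hgc⟩
      simp only [ContinuousMap.coe_mk] at h0
      have h0' : ∫ x, (g x - g (T x)) * ψ' x ∂μ = 0 := by
        rw [← h0]
        exact integral_congr_ae (hae.mono fun x hx => by dsimp only; rw [hx])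
      have h0'' : ∫ x, (g x * ψ' x - g (T x) * ψ' x) ∂μ = 0 := by
        simpa [sub_mul] using h0'
      have ig5 : Integrable (fun x => g x * ψ' x) μ := hint.bdd_mul hgm.aestronglyMeasurable (Filter.Eventually.of_forall hgbd.choose_spec)
      have ig6 : Integrable (fun x => g (T x) * ψ' x) μ :=
        hint.bdd_mul (hgm.comp hTm).aestronglyMeasurable (Filter.Eventually.of_forall fun x => hgbd.choose_spec (T x))
      rw [integral_sub ig5 ig6] at h0''
      linarith
    -- combine
    have hreal : ∫ x, g x * p x ∂μ + ∫ x, g (T x) * q x ∂μ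
        = ∫ x, g x * q x ∂μ + ∫ x, g (T x) * p x ∂μ := by
      have hA : ∫ x, g x * p x ∂μ - ∫ x, g x * q x ∂μ = ∫ x, g x * ψ' x ∂μ := by
        rw [← integral_sub ig1 ig2]
        exact integral_congr_ae (Filter.Eventually.of_forall fun x => by
          dsimp only; rw [← mul_sub, hpq x])
      have hB : ∫ x, g (T x) * p x ∂μ - ∫ x, g (T x) * q x ∂μ = ∫ x, g (T x) * ψ' x ∂μ := by
        rw [← integral_sub ig3 ig4]
        exact integral_congr_ae (Filter.Eventually.of_forall fun x => by
          dsimp only; rw [← mul_sub, hpq x])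
      linarith
    rw [lintegral_add_measure, lintegral_add_measure, e₁, e₂, e₃, e₄,
      ← ENNReal.ofReal_add (integral_nonneg fun x => mul_nonneg (hgnn x) (le_max_right _ _))
        (integral_nonneg fun x => mul_nonneg (hgnn (T x)) (le_max_right _ _)),
      ← ENNReal.ofReal_add (integral_nonneg fun x => mul_nonneg (hgnn x) (le_max_right _ _))
        (integral_nonneg fun x => mul_nonneg (hgnn (T x)) (le_max_right _ _)), hreal]
  -- pointwise identity on measurable sets
  have key' : ∀ E : Set X, MeasurableSet E →
      ρ₁ E + ρ₂ (T ⁻¹' E) = ρ₂ E + ρ₁ (T ⁻¹' E) := by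
    intro E hE
    have := congrArg (fun ν : Measure X => ν E) key
    simpa [Measure.add_apply, Measure.map_apply hTm hE] using this
  -- the positivity set of ψ'
  set A : Set X := {x | 0 < ψ' x} with hA
  have hAm : MeasurableSet A := measurableSet_lt measurable_const hm
  -- ρ₁ vanishes off A, ρ₂ vanishes on A-subsets
  have hρ₁off : ∀ E : Set X, MeasurableSet E → E ∩ A = ∅ → ρ₁ E = 0 := by
    intro E hE hEA
    rw [hρ₁, withDensity_apply _ hE]
    refine (setLIntegral_eq_zero_iff hE hd₁m).2 ?_
    refine Filter.Eventually.of_forall fun x hx => ?_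
    have hx' : ¬ 0 < ψ' x := fun h => Set.eq_empty_iff_forall_notMem.1 hEA x ⟨hx, h⟩
    simp [hd1, ENNReal.ofReal_eq_zero.2 (not_lt.1 hx')]
  have hρ₂on : ∀ E : Set X, MeasurableSet E → E ⊆ A → ρ₂ E = 0 := by
    intro E hE hEA
    rw [hρ₂, withDensity_apply _ hE]
    refine (setLIntegral_eq_zero_iff hE hd₂m).2 ?_
    refine Filter.Eventually.of_forall fun x hx => ?_
    have : 0 < ψ' x := hEA hx
    simp [hd2, ENNReal.ofReal_eq_zero.2 (by linarith : -ψ' x ≤ 0)]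
  -- ρ₁ is T-subinvariant
  have hsub : ∀ E : Set X, MeasurableSet E → ρ₁ E ≤ ρ₁ (T ⁻¹' E) := by
    intro E hE
    have hEA : MeasurableSet (E ∩ A) := hE.inter hAm
    have h₂ : ρ₂ (E ∩ A) = 0 := hρ₂on _ hEA Set.inter_subset_right
    have hk := key' _ hEA
    rw [h₂, zero_add] at hk
    have h₁ : ρ₁ E = ρ₁ (E ∩ A) := by
      have hdiff : ρ₁ (E \ A) = 0 := by
        refine hρ₁off _ (hE.diff hAm) ?_
        ext x; simp only [Set.mem_inter_iff, Set.mem_diff, Set.mem_empty_iff_false, iff_false]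
        rintro ⟨⟨_, hxA⟩, hxA'⟩; exact hxA hxA'
      rw [← measure_inter_add_diff E hAm, hdiff, add_zero]
    calc ρ₁ E = ρ₁ (E ∩ A) := h₁
      _ ≤ ρ₂ (T ⁻¹' (E ∩ A)) + ρ₁ (E ∩ A) := le_add_self
      _ = ρ₁ (T ⁻¹' (E ∩ A)) := by rw [← hk]; ring
      _ ≤ ρ₁ (T ⁻¹' E) := measure_mono (Set.preimage_mono Set.inter_subset_left)
  -- hence T-invariant
  have hinv : ∀ E : Set X, MeasurableSet E → ρ₁ (T ⁻¹' E) = ρ₁ E := by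
    intro E hE
    have h1 := hsub E hE
    have h2 := hsub Eᶜ hE.compl
    rw [Set.preimage_compl] at h2
    have htot : ρ₁ E + ρ₁ Eᶜ = ρ₁ (T ⁻¹' E) + ρ₁ (T ⁻¹' E)ᶜ := by
      rw [measure_add_measure_compl hE, measure_add_measure_compl (hTm hE)]
    have hfinE : ρ₁ (T ⁻¹' E)ᶜ ≠ ∞ := (measure_lt_top _ _).ne
    have : ρ₁ (T ⁻¹' E) + ρ₁ (T ⁻¹' E)ᶜ ≤ ρ₁ (T ⁻¹' E) + ρ₁ Eᶜ := by
      rw [← htot]; exact add_le_add h1 (le_refl _)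
    have h3 : ρ₁ (T ⁻¹' E)ᶜ ≤ ρ₁ Eᶜ := by
      exact (ENNReal.add_le_add_iff_left (measure_lt_top ρ₁ (T ⁻¹' E)).ne).1 this
    have h4 : ρ₁ (T ⁻¹' E)ᶜ = ρ₁ Eᶜ := le_antisymm h3 h2
    have := htot
    rw [h4] at this
    exact (ENNReal.add_left_inj (measure_lt_top ρ₁ Eᶜ).ne).1 this.symm
  -- a measurable null set outside which ψ = ψ'
  set N : Set X := toMeasurable μ {x | ψ x ≠ ψ' x} with hN
  have hNm : MeasurableSet N := measurableSet_toMeasurable _ _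
  have hNnull : μ N = 0 := by
    rw [hN, measure_toMeasurable]
    exact hae
  have hNsub : {x | ψ x ≠ ψ' x} ⊆ N := subset_toMeasurable _ _
  -- ρ₁-null sets inside A are μ-null
  have hρ₁pos : ∀ G : Set X, MeasurableSet G → G ⊆ A → ρ₁ G = 0 → μ G = 0 := by
    intro G hG hGA h0
    rw [hρ₁, withDensity_apply _ hG] at h0
    have hz := (setLIntegral_eq_zero_iff hG hd₁m).1 h0
    have hd₁pos : ∀ x ∈ G, d₁ x ≠ 0 := by
      intro x hx
      simp only [hd1, ne_eq, ENNReal.ofReal_eq_zero, not_le]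
      exact hGA hx
    rw [ae_iff] at hz
    refine measure_mono_null (fun x hx => ?_) hz
    simp only [Set.mem_setOf_eq, Classical.not_imp]
    exact ⟨hx, hd₁pos x hx⟩
  -- two null sets
  have null₁ : μ (A ∩ T ⁻¹' Aᶜ) = 0 := by
    refine hρ₁pos _ (hAm.inter (hTm hAm.compl)) Set.inter_subset_left ?_
    have h0 : ρ₁ (T ⁻¹' Aᶜ) = 0 := by
      rw [hinv _ hAm.compl]
      exact hρ₁off _ hAm.compl (by ext x; simp)
    exact le_antisymm (le_trans (measure_mono Set.inter_subset_right) h0.le) zero_le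
  have null₂ : μ (A ∩ T ⁻¹' N) = 0 := by
    refine hρ₁pos _ (hAm.inter (hTm hNm)) Set.inter_subset_left ?_
    have h0 : ρ₁ (T ⁻¹' N) = 0 := by
      rw [hinv _ hNm]
      exact le_antisymm ((withDensity_absolutelyContinuous μ d₁) hNnull).le zero_le
    exact le_antisymm (le_trans (measure_mono Set.inter_subset_right) h0.le) zero_le
  -- final inclusion
  have hincl : {x | 0 < ψ x} \ T ⁻¹' {x | 0 < ψ x}
      ⊆ N ∪ (A ∩ T ⁻¹' Aᶜ) ∪ (A ∩ T ⁻¹' N) := by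
    rintro x ⟨hx1, hx2⟩
    by_cases hxN : x ∈ N
    · exact Or.inl (Or.inl hxN)
    · have hxA : x ∈ A := by
        have : ψ x = ψ' x := not_not.1 fun h => hxN (hNsub h)
        simpa [hA, ← this] using hx1
      by_cases hTxN : T x ∈ N
      · exact Or.inr ⟨hxA, hTxN⟩
      · refine Or.inl (Or.inr ⟨hxA, ?_⟩)
        have hTeq : ψ (T x) = ψ' (T x) := not_not.1 fun h => hTxN (hNsub h)
        simp only [Set.mem_preimage, Set.mem_compl_iff, hA, Set.mem_setOf_eq, not_lt, ← hTeq]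
        exact not_lt.1 hx2
  refine measure_mono_null hincl ?_
  refine measure_union_null (measure_union_null hNnull null₁) null₂
end

section
/- Let μ be a Borel probability measure on a compact metric space X, T: X → X continuous, and ψ ∈ L²(μ) orthogonal to all functions φ - φ∘T with φ continuous. If ψ₊ = max(ψ, 0) is not μ-almost everywhere zero, then the measure ν₊ defined by dν₊ = ψ₊ dμ is T-invariant. -/
open MeasureTheory
open scoped ENNReal NNReal

theorem stmt_5 {X : Type*} [MetricSpace X] [CompactSpace X]
    [MeasurableSpace X] [BorelSpace X]
    (μ : Measure X) [IsProbabilityMeasure μ]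
    (T : X → X) (hT : Continuous T)
    (ψ : X → ℝ) (hψm : Measurable ψ) (hψ : MemLp ψ 2 μ)
    (horth : ∀ φ : C(X, ℝ), ∫ x, (φ x - φ (T x)) * ψ x ∂μ = 0)
    (hpos : ¬ ((fun x => max (ψ x) 0) =ᵐ[μ] (0 : X → ℝ)))
    (ν : Measure X)
    (hν : ν = μ.withDensity (fun x => ENNReal.ofReal (max (ψ x) 0))) :
    ∀ B : Set X, MeasurableSet B → ν (T ⁻¹' B) = ν B := by
  have hTm : Measurable T := hT.measurable
  set gp : X → ℝ := fun x => max (ψ x) 0 with hgp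
  set gm : X → ℝ := fun x => max (-ψ x) 0 with hgm
  have hψint : Integrable ψ μ := hψ.integrable one_le_two
  have hgp_int : Integrable gp μ := hψint.pos_part
  have hgm_int : Integrable gm μ := hψint.neg_part
  have hgpm : Measurable gp := hψm.max measurable_const
  have hgmm : Measurable gm := hψm.neg.max measurable_const
  have hgp0 : ∀ x, 0 ≤ gp x := fun x => le_max_right _ _
  have hgm0 : ∀ x, 0 ≤ gm x := fun x => le_max_right _ _
  set νp : Measure X := μ.withDensity (fun x => ENNReal.ofReal (gp x)) with hνp
  set νm : Measure X := μ.withDensity (fun x => ENNReal.ofReal (gm x)) with hνm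
  haveI : IsFiniteMeasure νp := isFiniteMeasure_withDensity_ofReal hgp_int.2
  haveI : IsFiniteMeasure νm := isFiniteMeasure_withDensity_ofReal hgm_int.2
  -- integral of a function against νp, νm
  have key_int : ∀ (h : X → ℝ), Measurable h →
      (∫ x, h x ∂νp = ∫ x, gp x * h x ∂μ) ∧ (∫ x, h x ∂νm = ∫ x, gm x * h x ∂μ) := by
    intro h hhm
    constructor
    · rw [hνp]
      have : (fun x => ENNReal.ofReal (gp x)) = fun x => ((fun y => (gp y).toNNReal) x : ℝ≥0∞) :=
        rfl
      rw [this, integral_withDensity_eq_integral_smul (hgpm.real_toNNReal)]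
      congr 1 with x
      simp [NNReal.smul_def, Real.coe_toNNReal _ (hgp0 x)]
    · rw [hνm]
      have : (fun x => ENNReal.ofReal (gm x)) = fun x => ((fun y => (gm y).toNNReal) x : ℝ≥0∞) :=
        rfl
      rw [this, integral_withDensity_eq_integral_smul (hgmm.real_toNNReal)]
      congr 1 with x
      simp [NNReal.smul_def, Real.coe_toNNReal _ (hgm0 x)]
  -- the key measure identity
  have M : νp.map T + νm = νp + νm.map T := by
    apply ext_of_forall_lintegral_eq_of_IsFiniteMeasure
    intro f
    set g : X → ℝ := fun x => (f x : ℝ) with hg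
    have hgc : Continuous g := NNReal.continuous_coe.comp f.continuous
    have hg0 : ∀ x, 0 ≤ g x := fun x => (f x).2
    obtain ⟨C, hC⟩ : ∃ C, ∀ x, ‖g x‖ ≤ C := by
      obtain ⟨C, hC⟩ := isCompact_univ.exists_bound_of_continuousOn
        (hgc.norm.continuousOn (s := Set.univ))
      exact ⟨C, fun x => by simpa using hC x (Set.mem_univ x)⟩
    have hgbd : ∀ x, ‖g x‖ ≤ C := hC
    have hgTbd : ∀ x, ‖g (T x)‖ ≤ C := fun x => hgbd (T x)
    -- integrability of products
    have int_pg : Integrable (fun x => gp x * g x) μ := by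
      simpa [mul_comm] using hgp_int.bdd_mul hgc.aestronglyMeasurable (Filter.Eventually.of_forall hgbd)
    have int_mg : Integrable (fun x => gm x * g x) μ := by
      simpa [mul_comm] using hgm_int.bdd_mul hgc.aestronglyMeasurable (Filter.Eventually.of_forall hgbd)
    have int_pgT : Integrable (fun x => gp x * g (T x)) μ := by
      simpa [mul_comm] using hgp_int.bdd_mul (hgc.comp hT).aestronglyMeasurable (Filter.Eventually.of_forall hgTbd)
    have int_mgT : Integrable (fun x => gm x * g (T x)) μ := by
      simpa [mul_comm] using hgm_int.bdd_mul (hgc.comp hT).aestronglyMeasurable (Filter.Eventually.of_forall hgTbd)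
    -- the orthogonality identity, split into positive and negative parts
    have horth' : ∫ x, g x * ψ x ∂μ = ∫ x, g (T x) * ψ x ∂μ := by
      have := horth ⟨g, hgc⟩
      simp only [ContinuousMap.coe_mk, sub_mul] at this
      have h1 : Integrable (fun x => g x * ψ x) μ := by
        simpa [mul_comm] using hψint.bdd_mul hgc.aestronglyMeasurable (Filter.Eventually.of_forall hgbd)
      have h2 : Integrable (fun x => g (T x) * ψ x) μ := by
        simpa [mul_comm] using hψint.bdd_mul (hgc.comp hT).aestronglyMeasurable (Filter.Eventually.of_forall hgTbd)
      rw [integral_sub h1 h2] at this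
      linarith
    have hsplit : ∀ x, ψ x = gp x - gm x := by
      intro x
      show ψ x = max (ψ x) 0 - max (-ψ x) 0
      rcases le_total (ψ x) 0 with h | h
      · rw [max_eq_right h, max_eq_left (by linarith)]; ring
      · rw [max_eq_left h, max_eq_right (by linarith)]; ring
    have hreal : ∫ x, gp x * g (T x) ∂μ + ∫ x, gm x * g x ∂μ
        = ∫ x, gp x * g x ∂μ + ∫ x, gm x * g (T x) ∂μ := by
      have e1 : ∫ x, g x * ψ x ∂μ = ∫ x, gp x * g x ∂μ - ∫ x, gm x * g x ∂μ := by
        rw [← integral_sub int_pg int_mg]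
        congr 1 with x
        rw [hsplit x]; ring
      have e2 : ∫ x, g (T x) * ψ x ∂μ
          = ∫ x, gp x * g (T x) ∂μ - ∫ x, gm x * g (T x) ∂μ := by
        rw [← integral_sub int_pgT int_mgT]
        congr 1 with x
        rw [hsplit x]; ring
      rw [e1, e2] at horth'
      linarith
    -- convert to lintegrals
    have hmble : Measurable g := hgc.measurable
    haveI : IsFiniteMeasure (νp.map T) := by
      constructor
      rw [Measure.map_apply hTm MeasurableSet.univ, Set.preimage_univ]
      exact measure_lt_top _ _
    haveI : IsFiniteMeasure (νm.map T) := by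
      constructor
      rw [Measure.map_apply hTm MeasurableSet.univ, Set.preimage_univ]
      exact measure_lt_top _ _
    have mk_int : ∀ (κ : Measure X) [IsFiniteMeasure κ], Integrable g κ := by
      intro κ _
      exact ⟨hgc.aestronglyMeasurable,
        HasFiniteIntegral.of_bounded (C := C) (Filter.Eventually.of_forall hgbd)⟩
    have int_g_νp : Integrable g νp := mk_int νp
    have int_g_νm : Integrable g νm := mk_int νm
    have int_g_νpT : Integrable g (νp.map T) := mk_int _
    have int_g_νmT : Integrable g (νm.map T) := mk_int _
    have map_p : ∫ x, g x ∂(νp.map T) = ∫ x, gp x * g (T x) ∂μ := by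
      rw [integral_map hTm.aemeasurable hgc.aestronglyMeasurable]
      exact (key_int (g ∘ T) (hmble.comp hTm)).1
    have map_m : ∫ x, g x ∂(νm.map T) = ∫ x, gm x * g (T x) ∂μ := by
      rw [integral_map hTm.aemeasurable hgc.aestronglyMeasurable]
      exact (key_int (g ∘ T) (hmble.comp hTm)).2
    have i_p : ∫ x, g x ∂νp = ∫ x, gp x * g x ∂μ := (key_int g hmble).1
    have i_m : ∫ x, g x ∂νm = ∫ x, gm x * g x ∂μ := (key_int g hmble).2
    rw [lintegral_add_measure, lintegral_add_measure,
      lintegral_coe_eq_integral _ int_g_νpT, lintegral_coe_eq_integral _ int_g_νm,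
      lintegral_coe_eq_integral _ int_g_νp, lintegral_coe_eq_integral _ int_g_νmT,
      ← ENNReal.ofReal_add (integral_nonneg hg0) (integral_nonneg hg0),
      ← ENNReal.ofReal_add (integral_nonneg hg0) (integral_nonneg hg0)]
    rw [map_p, map_m, i_p, i_m, hreal]
  -- vanishing lemmas
  have hP : MeasurableSet {x | 0 < ψ x} := measurableSet_lt measurable_const hψm
  have νm_zero : ∀ B : Set X, MeasurableSet B → B ⊆ {x | 0 < ψ x} → νm B = 0 := by
    intro B hB hBP
    rw [hνm, withDensity_apply _ hB]
    rw [setLIntegral_congr_fun_ae hB (Filter.Eventually.of_forall (fun x hx => ?_)), lintegral_zero]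
    have : 0 < ψ x := hBP hx
    simp [hgm]
    linarith
  have νp_zero : ∀ B : Set X, MeasurableSet B → B ⊆ {x | 0 < ψ x}ᶜ → νp B = 0 := by
    intro B hB hBP
    rw [hνp, withDensity_apply _ hB]
    rw [setLIntegral_congr_fun_ae hB (Filter.Eventually.of_forall (fun x hx => ?_)), lintegral_zero]
    have : ¬ 0 < ψ x := hBP hx
    simp [hgp]
    linarith [not_lt.mp this]
  -- νp ≤ νp.map T on measurable sets
  have hle : ∀ B : Set X, MeasurableSet B → νp B ≤ (νp.map T) B := by
    intro B hB
    set S := B ∩ {x | 0 < ψ x} with hS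
    have hSm : MeasurableSet S := hB.inter hP
    have h1 : νp B = νp S := by
      have h0 : νp (B \ {x | 0 < ψ x}) = 0 := by
        apply νp_zero _ (hB.diff hP)
        intro x hx
        exact hx.2
      have hsplit := measure_inter_add_diff (μ := νp) B hP
      rw [h0, add_zero] at hsplit
      exact hsplit.symm
    have h2 : (νp.map T) S + νm S = νp S + (νm.map T) S := by
      have := congrArg (fun m : Measure X => m S) M
      simpa [Measure.add_apply] using this
    have h3 : νm S = 0 := νm_zero _ hSm (fun x hx => hx.2)
    rw [h3, add_zero] at h2
    calc νp B = νp S := h1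
      _ ≤ νp S + (νm.map T) S := le_self_add
      _ = (νp.map T) S := h2.symm
      _ ≤ (νp.map T) B := measure_mono Set.inter_subset_left
  -- equal total mass forces equality
  have htot : (νp.map T) Set.univ = νp Set.univ := by
    rw [Measure.map_apply hTm MeasurableSet.univ, Set.preimage_univ]
  have heq : ∀ B : Set X, MeasurableSet B → (νp.map T) B = νp B := by
    intro B hB
    have hc := hle Bᶜ hB.compl
    have hb := hle B hB
    have t1 : νp B + νp Bᶜ = νp Set.univ := measure_add_measure_compl hB
    have t2 : (νp.map T) B + (νp.map T) Bᶜ = (νp.map T) Set.univ :=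
      measure_add_measure_compl hB
    haveI : IsFiniteMeasure (νp.map T) := by
      constructor
      rw [htot]
      exact measure_lt_top _ _
    have f1 : νp B ≠ ⊤ := measure_ne_top _ _
    have f2 : νp Bᶜ ≠ ⊤ := measure_ne_top _ _
    have f3 : (νp.map T) B ≠ ⊤ := measure_ne_top _ _
    have f4 : (νp.map T) Bᶜ ≠ ⊤ := measure_ne_top _ _
    have := htot
    rw [← t1, ← t2] at this
    refine le_antisymm ?_ hb
    by_contra hlt
    push_neg at hlt
    have : (νp.map T) B + (νp.map T) Bᶜ > νp B + νp Bᶜ := by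
      exact ENNReal.add_lt_add_of_lt_of_le f2 hlt hc
    rw [t1, t2, htot] at this
    exact lt_irrefl _ this
  -- conclude
  intro B hB
  rw [hν]
  have : νp (T ⁻¹' B) = (νp.map T) B := (Measure.map_apply hTm hB).symm
  calc μ.withDensity (fun x => ENNReal.ofReal (max (ψ x) 0)) (T ⁻¹' B)
      = νp (T ⁻¹' B) := rfl
    _ = (νp.map T) B := this
    _ = νp B := heq B hB
    _ = μ.withDensity (fun x => ENNReal.ofReal (max (ψ x) 0)) B := rfl
end

section
/- If 0 < a ≤ 4, then the replicator map f_{a,b}(x) = x/(x + (1-x)e^{a(x-b)}) is monotone increasing on [0,1], because a·x² - a·x + 1 ≥ 0 for all x ∈ [0,1]. -/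
noncomputable def replicator (a b : ℝ) (x : ℝ) : ℝ :=
  x / (x + (1 - x) * Real.exp (a * (x - b)))

theorem stmt_13 (a b : ℝ) (ha : 0 < a) (ha4 : a ≤ 4) (hb : b ∈ Set.Ioo (0 : ℝ) 1) :
    (∀ x ∈ Set.Icc (0 : ℝ) 1, 0 ≤ a * x ^ 2 - a * x + 1) ∧
    MonotoneOn (replicator a b) (Set.Icc (0 : ℝ) 1) := by
  have key : ∀ x ∈ Set.Icc (0:ℝ) 1, 0 ≤ a * x ^ 2 - a * x + 1 := by
    rintro x ⟨hx0, hx1⟩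
    nlinarith [sq_nonneg (2*x-1),
      mul_nonneg (mul_nonneg (sub_nonneg.2 ha4) hx0) (sub_nonneg.2 hx1)]
  refine ⟨key, ?_⟩
  have hD : ∀ x ∈ Set.Icc (0:ℝ) 1, 0 < x + (1 - x) * Real.exp (a * (x - b)) := by
    rintro x ⟨hx0, hx1⟩
    rcases eq_or_lt_of_le hx0 with h | h
    · rw [← h]; simpa using Real.exp_pos _
    · have : 0 ≤ (1 - x) * Real.exp (a * (x - b)) :=
        mul_nonneg (by linarith) (Real.exp_pos _).le
      linarith
  have hderiv : ∀ x ∈ Set.Icc (0:ℝ) 1,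
      HasDerivAt (replicator a b)
        ((1 * (x + (1 - x) * Real.exp (a * (x - b))) -
          x * (1 + ((-1) * Real.exp (a * (x - b)) + (1 - x) * (Real.exp (a * (x - b)) * (a * 1))))) /
          (x + (1 - x) * Real.exp (a * (x - b))) ^ 2) x := by
    intro x hx
    have hE : HasDerivAt (fun x => Real.exp (a * (x - b))) (Real.exp (a * (x - b)) * (a * 1)) x := by
      have h1 : HasDerivAt (fun x : ℝ => a * (x - b)) (a * 1) x :=
        ((hasDerivAt_id x).sub_const b).const_mul a
      exact (Real.hasDerivAt_exp _).comp x h1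
    have h2 : HasDerivAt (fun x : ℝ => 1 - x) (-1) x := by
      exact (hasDerivAt_id' x).const_sub (1:ℝ)
    have hDd : HasDerivAt (fun x => x + (1 - x) * Real.exp (a * (x - b)))
        (1 + ((-1) * Real.exp (a * (x - b)) + (1 - x) * (Real.exp (a * (x - b)) * (a * 1)))) x :=
      (hasDerivAt_id x).add (h2.mul hE)
    exact (hasDerivAt_id x).div hDd (hD x hx).ne'
  apply monotoneOn_of_deriv_nonneg (convex_Icc 0 1)
  · exact fun x hx => (hderiv x hx).continuousAt.continuousWithinAt
  · rw [interior_Icc]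
    exact fun x hx => ((hderiv x (Set.Ioo_subset_Icc_self hx)).differentiableAt).differentiableWithinAt
  · rw [interior_Icc]
    intro x hx
    have hx' := Set.Ioo_subset_Icc_self hx
    rw [(hderiv x hx').deriv]
    have hnum : (1 * (x + (1 - x) * Real.exp (a * (x - b))) -
        x * (1 + ((-1) * Real.exp (a * (x - b)) + (1 - x) * (Real.exp (a * (x - b)) * (a * 1)))))
        = Real.exp (a * (x - b)) * (a * x ^ 2 - a * x + 1) := by ring
    rw [hnum]
    exact div_nonneg (mul_nonneg (Real.exp_pos _).le (key x hx')) (sq_nonneg _)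
end

section
/- Let h(x) = ln((1-x)/x) on (0,1) and g_{a,b}(y) = y + a/(e^y + 1) - a·b on ℝ. Then for all x ∈ (0,1), g_{a,b}(h(x)) = h(f_{a,b}(x)), where f_{a,b}(x) = x/(x + (1-x)e^{a(x-b)}); that is, h conjugates f_{a,b} to g_{a,b}. -/
noncomputable def gMap (a b : ℝ) (y : ℝ) : ℝ :=
  y + a / (Real.exp y + 1) - a * b

theorem stmt_16 (a b : ℝ) (ha : 0 < a) (hb : b ∈ Set.Ioo (0 : ℝ) 1) :
    ∀ x ∈ Set.Ioo (0 : ℝ) 1,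
      gMap a b (Real.log ((1 - x) / x)) =
        Real.log ((1 - replicator a b x) / replicator a b x) := by
  rintro x ⟨hx0, hx1⟩
  have h1x : (0:ℝ) < 1 - x := by linarith
  have he : (0:ℝ) < Real.exp (a * (x - b)) := Real.exp_pos _
  have hd : (0:ℝ) < x + (1 - x) * Real.exp (a * (x - b)) := by positivity
  have hratio : (0:ℝ) < (1 - x) / x := div_pos h1x hx0
  have hexp : Real.exp (Real.log ((1 - x) / x)) = (1 - x) / x := Real.exp_log hratio
  have hf : (1 - replicator a b x) / replicator a b x
      = (1 - x) / x * Real.exp (a * (x - b)) := by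
    unfold replicator
    field_simp
    ring
  rw [hf, Real.log_mul (by positivity) (by positivity), Real.log_exp]
  unfold gMap
  rw [hexp]
  have : a / ((1 - x) / x + 1) = a * x := by
    rw [div_add_one (ne_of_gt hx0)]
    field_simp
    ring
  rw [this]
  ring
end
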